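/- Let G be a group and define T, U : G × G → G × G by T(h,y) = (h, h⁻¹y) and U(h,y) = (yh, y). Then for all h, y ∈ G: (T∘U)(h,y) = (yh, h⁻¹); (T∘U)³(h,y) = (h⁻¹·[y,h], (y⁻¹)^h); and (T∘U)⁶(h,y) = (h^{[y,h]}, y^{[y,h]}) = ([y,h]⁻¹·h·[y,h], [y,h]⁻¹·y·[y,h]). (Here f∘g means first apply g, then f; the sixth power realizes the Dehn twist along a genus-1 separating curve.) -/
import Mathlib

/-- The map `T : (h,y) ↦ (h, h⁻¹y)` on `G × G`. -/
def TmapTU (G : Type*) [Group G] : G × G → G × G :=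
  fun p => (p.1, p.1⁻¹ * p.2)

/-- The map `U : (h,y) ↦ (yh, y)` on `G × G`. -/
def UmapTU (G : Type*) [Group G] : G × G → G × G :=
  fun p => (p.2 * p.1, p.2)

/-- `(T∘U)(h,y) = (yh, h⁻¹)`, `(T∘U)³(h,y) = (h⁻¹·[y,h], (y⁻¹)^h)` and
`(T∘U)⁶(h,y) = (h^{[y,h]}, y^{[y,h]}) = ([y,h]⁻¹·h·[y,h], [y,h]⁻¹·y·[y,h])`,
where `[y,h] = y⁻¹h⁻¹yh` and `a^b = b⁻¹ab`. -/
theorem TU_powers (G : Type*) [Group G] (h y : G) :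
    (TmapTU G ∘ UmapTU G) (h, y) = (y * h, h⁻¹) ∧
    (TmapTU G ∘ UmapTU G)^[3] (h, y) =
      (h⁻¹ * (y⁻¹ * h⁻¹ * y * h), h⁻¹ * y⁻¹ * h) ∧
    (TmapTU G ∘ UmapTU G)^[6] (h, y) =
      ((y⁻¹ * h⁻¹ * y * h)⁻¹ * h * (y⁻¹ * h⁻¹ * y * h),
       (y⁻¹ * h⁻¹ * y * h)⁻¹ * y * (y⁻¹ * h⁻¹ * y * h)) := by
  refine ⟨?_, ?_, ?_⟩ <;>
    simp only [Function.iterate_succ, Function.iterate_zero, Function.comp_apply, id_eq,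
      TmapTU, UmapTU, Prod.mk.injEq] <;> constructor <;> group
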